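/- Let p be a prime, e ≥ 1, and A, B ∈ R = ℤ/p^eℤ. Let e₁, e₂ ≥ 1 and let X₁, Z₁, X₂, Z₂ ∈ R satisfy p^(e₁) ∣ X₁, p^(e₂) ∣ X₂, p ∣ Z₁, p ∣ Z₂, and the curve equations Zᵢ = Xᵢ³ + A·Xᵢ·Zᵢ² + B·Zᵢ³ for i = 1, 2. Set m = min(e₁, e₂) and let T₁, T₂, T₃ be the Bosma–Lenstra addition-law polynomials evaluated at these data. Then modulo p^(5m) one has: T₁ ≡ X₁ + X₂, T₂ ≡ 1 + 3A·X₁²·X₂², and T₃ ≡ (X₁ + X₂)³; i.e. (p : R)^(5m) divides each of T₁ − (X₁+X₂), T₂ − (1 + 3A·X₁²·X₂²), and T₃ − (X₁+X₂)³. -/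

import Mathlib

lemma pd_mul {R : Type*} [CommRing R] (π : R) {a b : ℕ} {u v : R}
    (h1 : π ^ a ∣ u) (h2 : π ^ b ∣ v) : π ^ (a + b) ∣ u * v := by
  rw [pow_add]; exact mul_dvd_mul h1 h2

lemma pd_le {R : Type*} [CommRing R] (π : R) {a b : ℕ} {u : R}
    (h : a ≤ b) (hd : π ^ b ∣ u) : π ^ a ∣ u :=
  (pow_dvd_pow π h).trans hd

lemma aux_dvd_Z {R : Type*} [CommRing R] (π A B X Z : R) (m : ℕ)
    (hX : π ^ m ∣ X) (hZ : π ∣ Z)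
    (heq : Z = X ^ 3 + A * X * Z ^ 2 + B * Z ^ 3) :
    π ^ (3 * m) ∣ Z := by
  have main : ∀ k : ℕ, π ^ (min (3 * m) (3 ^ k)) ∣ Z := by
    intro k
    induction k with
    | zero =>
      exact pd_le π (b := 1) (by rw [pow_zero]; exact min_le_right _ _)
        (by simpa using hZ)
    | succ k ih =>
      have ht : (3 : ℕ) ^ (k + 1) = 3 ^ k * 3 := pow_succ 3 k
      have hx3 : π ^ (min (3 * m) (3 ^ (k + 1))) ∣ X ^ 3 := by
        refine pd_le π (b := m + (m + m)) (by omega) ?_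
        rw [show X ^ 3 = X * (X * X) by ring]
        exact pd_mul π hX (pd_mul π hX hX)
      have hxz : π ^ (min (3 * m) (3 ^ (k + 1))) ∣ A * X * Z ^ 2 := by
        refine pd_le π (b := m + (min (3 * m) (3 ^ k) + min (3 * m) (3 ^ k)))
          (by omega) ?_
        rw [show A * X * Z ^ 2 = A * (X * (Z * Z)) by ring]
        exact (pd_mul π hX (pd_mul π ih ih)).mul_left A
      have hz3 : π ^ (min (3 * m) (3 ^ (k + 1))) ∣ B * Z ^ 3 := by
        refine pd_le π
          (b := min (3 * m) (3 ^ k) + (min (3 * m) (3 ^ k) + min (3 * m) (3 ^ k)))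
          (by omega) ?_
        rw [show B * Z ^ 3 = B * (Z * (Z * Z)) by ring]
        exact (pd_mul π ih (pd_mul π ih ih)).mul_left B
      rw [heq]
      exact dvd_add (dvd_add hx3 hxz) hz3
  have hlt : 3 * m < 3 ^ (3 * m) := Nat.lt_pow_self (by norm_num)
  have := main (3 * m)
  rwa [min_eq_left hlt.le] at this

/-- First Bosma–Lenstra addition-law polynomial, specialized at `Y₁ = Y₂ = 1`. -/
def bosmaLenstraT1 {R : Type*} [CommRing R] (A B X₁ Z₁ X₂ Z₂ : R) : R :=
  (X₁ + X₂) - A * X₁ * X₂ * (Z₁ + Z₂) - A * (X₁ + X₂) * (X₁ * Z₂ + X₂ * Z₁)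
    - 3 * B * (X₁ + X₂) * Z₁ * Z₂ - 3 * B * (X₁ * Z₂ + X₂ * Z₁) * (Z₁ + Z₂)
    + A ^ 2 * (Z₁ + Z₂) * Z₁ * Z₂

/-- Second Bosma–Lenstra addition-law polynomial, specialized at `Y₁ = Y₂ = 1`. -/
def bosmaLenstraT2 {R : Type*} [CommRing R] (A B X₁ Z₁ X₂ Z₂ : R) : R :=
  1 + 3 * A * X₁ ^ 2 * X₂ ^ 2 + 9 * B * X₁ * X₂ * (X₁ * Z₂ + X₂ * Z₁)
    - A ^ 2 * X₁ * Z₂ * (X₁ * Z₂ + 2 * X₂ * Z₁)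
    - A ^ 2 * X₂ * Z₁ * (2 * X₁ * Z₂ + X₂ * Z₁)
    - 3 * A * B * Z₁ * Z₂ * (X₁ * Z₂ + X₂ * Z₁)
    - (A ^ 3 + 9 * B ^ 2) * Z₁ ^ 2 * Z₂ ^ 2

/-- Third Bosma–Lenstra addition-law polynomial, specialized at `Y₁ = Y₂ = 1`. -/
def bosmaLenstraT3 {R : Type*} [CommRing R] (A B X₁ Z₁ X₂ Z₂ : R) : R :=
  3 * X₁ * X₂ * (X₁ + X₂) + (Z₁ + Z₂) + A * (X₁ + X₂) * Z₁ * Z₂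
    + A * (X₁ * Z₂ + X₂ * Z₁) * (Z₁ + Z₂) + 3 * B * (Z₁ + Z₂) * Z₁ * Z₂

/-- For two points at infinity on the Weierstrass curve over `ℤ/p^eℤ`, the
Bosma–Lenstra addition-law polynomials satisfy, modulo `p^(5·min(e₁,e₂))`:
`T₁ ≡ X₁ + X₂`, `T₂ ≡ 1 + 3A·X₁²·X₂²` and `T₃ ≡ (X₁ + X₂)³`. -/
theorem infinity_sum_addition_law_congruences
    {p : ℕ} (hp : p.Prime) {e : ℕ} (he : 1 ≤ e)
    (A B : ZMod (p ^ e)) {e₁ e₂ : ℕ} (he₁ : 1 ≤ e₁) (he₂ : 1 ≤ e₂)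
    (X₁ Z₁ X₂ Z₂ : ZMod (p ^ e))
    (hX₁ : (p : ZMod (p ^ e)) ^ e₁ ∣ X₁) (hX₂ : (p : ZMod (p ^ e)) ^ e₂ ∣ X₂)
    (hZ₁ : (p : ZMod (p ^ e)) ∣ Z₁) (hZ₂ : (p : ZMod (p ^ e)) ∣ Z₂)
    (heq₁ : Z₁ = X₁ ^ 3 + A * X₁ * Z₁ ^ 2 + B * Z₁ ^ 3)
    (heq₂ : Z₂ = X₂ ^ 3 + A * X₂ * Z₂ ^ 2 + B * Z₂ ^ 3) :
    (p : ZMod (p ^ e)) ^ (5 * min e₁ e₂) ∣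
        bosmaLenstraT1 A B X₁ Z₁ X₂ Z₂ - (X₁ + X₂) ∧
    (p : ZMod (p ^ e)) ^ (5 * min e₁ e₂) ∣
        bosmaLenstraT2 A B X₁ Z₁ X₂ Z₂ - (1 + 3 * A * X₁ ^ 2 * X₂ ^ 2) ∧
    (p : ZMod (p ^ e)) ^ (5 * min e₁ e₂) ∣
        bosmaLenstraT3 A B X₁ Z₁ X₂ Z₂ - (X₁ + X₂) ^ 3 := by
  set π : ZMod (p ^ e) := (p : ZMod (p ^ e)) with hπ
  set m : ℕ := min e₁ e₂ with hm
  have hx1 : π ^ m ∣ X₁ := (pow_dvd_pow π (min_le_left e₁ e₂)).trans hX₁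
  have hx2 : π ^ m ∣ X₂ := (pow_dvd_pow π (min_le_right e₁ e₂)).trans hX₂
  have hz1 : π ^ (3 * m) ∣ Z₁ := aux_dvd_Z π A B X₁ Z₁ m hx1 hZ₁ heq₁
  have hz2 : π ^ (3 * m) ∣ Z₂ := aux_dvd_Z π A B X₂ Z₂ m hx2 hZ₂ heq₂
  have hS : π ^ m ∣ X₁ + X₂ := dvd_add hx1 hx2
  have hZS : π ^ (3 * m) ∣ Z₁ + Z₂ := dvd_add hz1 hz2
  have hZZ : π ^ (6 * m) ∣ Z₁ * Z₂ := pd_le π (by omega) (pd_mul π hz1 hz2)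
  have hxz12 : π ^ (4 * m) ∣ X₁ * Z₂ := pd_le π (by omega) (pd_mul π hx1 hz2)
  have hxz21 : π ^ (4 * m) ∣ X₂ * Z₁ := pd_le π (by omega) (pd_mul π hx2 hz1)
  have hC : π ^ (4 * m) ∣ X₁ * Z₂ + X₂ * Z₁ := dvd_add hxz12 hxz21
  refine ⟨?_, ?_, ?_⟩
  · have h1 : bosmaLenstraT1 A B X₁ Z₁ X₂ Z₂ - (X₁ + X₂) =
        A ^ 2 * ((Z₁ + Z₂) * (Z₁ * Z₂)) - A * (X₁ * X₂ * (Z₁ + Z₂))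
          - A * ((X₁ + X₂) * (X₁ * Z₂ + X₂ * Z₁))
          - 3 * B * ((X₁ + X₂) * (Z₁ * Z₂))
          - 3 * B * ((X₁ * Z₂ + X₂ * Z₁) * (Z₁ + Z₂)) := by
      simp only [bosmaLenstraT1]; ring
    rw [h1]
    refine dvd_sub (dvd_sub (dvd_sub (dvd_sub ?_ ?_) ?_) ?_) ?_
    · exact (pd_le π (by omega) (pd_mul π hZS hZZ)).mul_left _
    · exact (pd_le π (by omega) (pd_mul π (pd_mul π hx1 hx2) hZS)).mul_left _
    · exact (pd_le π (by omega) (pd_mul π hS hC)).mul_left _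
    · exact (pd_le π (by omega) (pd_mul π hS hZZ)).mul_left _
    · exact (pd_le π (by omega) (pd_mul π hC hZS)).mul_left _
  · have h2 : bosmaLenstraT2 A B X₁ Z₁ X₂ Z₂ - (1 + 3 * A * X₁ ^ 2 * X₂ ^ 2) =
        9 * B * (X₁ * X₂ * (X₁ * Z₂ + X₂ * Z₁))
          - A ^ 2 * ((X₁ * Z₂) * (X₁ * Z₂ + 2 * (X₂ * Z₁)))
          - A ^ 2 * ((X₂ * Z₁) * (2 * (X₁ * Z₂) + X₂ * Z₁))
          - 3 * (A * B) * ((Z₁ * Z₂) * (X₁ * Z₂ + X₂ * Z₁))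
          - (A ^ 3 + 9 * B ^ 2) * ((Z₁ * Z₁) * (Z₂ * Z₂)) := by
      simp only [bosmaLenstraT2]; ring
    rw [h2]
    have hC2 : π ^ (4 * m) ∣ X₁ * Z₂ + 2 * (X₂ * Z₁) :=
      dvd_add hxz12 (hxz21.mul_left 2)
    have hC3 : π ^ (4 * m) ∣ 2 * (X₁ * Z₂) + X₂ * Z₁ :=
      dvd_add (hxz12.mul_left 2) hxz21
    refine dvd_sub (dvd_sub (dvd_sub (dvd_sub ?_ ?_) ?_) ?_) ?_
    · exact (pd_le π (by omega) (pd_mul π (pd_mul π hx1 hx2) hC)).mul_left _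
    · exact (pd_le π (by omega) (pd_mul π hxz12 hC2)).mul_left _
    · exact (pd_le π (by omega) (pd_mul π hxz21 hC3)).mul_left _
    · exact (pd_le π (by omega) (pd_mul π hZZ hC)).mul_left _
    · exact (pd_le π (by omega) (pd_mul π (pd_mul π hz1 hz1) (pd_mul π hz2 hz2))).mul_left _
  · have h3 : bosmaLenstraT3 A B X₁ Z₁ X₂ Z₂ - (X₁ + X₂) ^ 3 =
        A * (X₁ * (Z₁ * Z₁)) + B * (Z₁ * (Z₁ * Z₁))
          + A * (X₂ * (Z₂ * Z₂)) + B * (Z₂ * (Z₂ * Z₂))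
          + A * ((X₁ + X₂) * (Z₁ * Z₂))
          + A * ((X₁ * Z₂ + X₂ * Z₁) * (Z₁ + Z₂))
          + 3 * B * ((Z₁ + Z₂) * (Z₁ * Z₂)) := by
      simp only [bosmaLenstraT3]; linear_combination heq₁ + heq₂
    rw [h3]
    refine dvd_add (dvd_add (dvd_add (dvd_add (dvd_add (dvd_add ?_ ?_) ?_) ?_) ?_) ?_) ?_
    · exact (pd_le π (by omega) (pd_mul π hx1 (pd_mul π hz1 hz1))).mul_left _
    · exact (pd_le π (by omega) (pd_mul π hz1 (pd_mul π hz1 hz1))).mul_left _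
    · exact (pd_le π (by omega) (pd_mul π hx2 (pd_mul π hz2 hz2))).mul_left _
    · exact (pd_le π (by omega) (pd_mul π hz2 (pd_mul π hz2 hz2))).mul_left _
    · exact (pd_le π (by omega) (pd_mul π hS hZZ)).mul_left _
    · exact (pd_le π (by omega) (pd_mul π hC hZS)).mul_left _
    · exact (pd_le π (by omega) (pd_mul π hZS hZZ)).mul_left _
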